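/- Two-sided quadratic bound for the higher-order dissipation density D_j: suppose γ > 4/3. Define, for real a, b with 1+a > 0 and 1+a+b > 0, the coefficients h₁(a,b) = (2−2γ)(1+a)^{1−2γ}(1+a+b)^{−γ} − γ(1+a)^{2−2γ}(1+a+b)^{−γ−1} + 2(1+a)^{−3}, h₂(a,b) = −γ(1+a)^{2−2γ}(1+a+b)^{−γ−1}, h₃(a,b) = (1−2γ)(1+a)^{−2γ}(1+a+b)^{−γ} − γ(1+a)^{1−2γ}(1+a+b)^{−γ−1} − 3(1+a)^{−4}, and the quadratic form D(a,b,X,Y) = −(h₁(a,b)X + h₂(a,b)Y)(3X + Y) + (3h₂(a,b) − h₁(a,b)) XY − 2h₃(a,b) b X². Then there exist ε ∈ (0, 1/2), c > 0 and C > 0, depending only on γ, such that for all a, b with |a| ≤ ε, |b| ≤ ε and all real X, Y: c(X² + Y²) ≤ D(a,b,X,Y) ≤ C(X² + Y²). -/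

import Mathlib

open Real Set

set_option maxHeartbeats 1000000 in
/-- Two-sided quadratic bound for the higher-order dissipation density D_j: for γ > 4/3 there
are ε ∈ (0, 1/2), c > 0 and C > 0 (depending only on γ) such that
c(X²+Y²) ≤ D(a,b,X,Y) ≤ C(X²+Y²) whenever |a| ≤ ε, |b| ≤ ε. -/
theorem stmt_19 (γ : ℝ) (hγ : 4 / 3 < γ) :
    let h₁ : ℝ → ℝ → ℝ := fun a b =>
      (2 - 2 * γ) * (1 + a) ^ (1 - 2 * γ) * (1 + a + b) ^ (-γ)
        - γ * (1 + a) ^ (2 - 2 * γ) * (1 + a + b) ^ (-γ - 1) + 2 * (1 + a) ^ (-3 : ℝ);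
    let h₂ : ℝ → ℝ → ℝ := fun a b => -γ * (1 + a) ^ (2 - 2 * γ) * (1 + a + b) ^ (-γ - 1);
    let h₃ : ℝ → ℝ → ℝ := fun a b =>
      (1 - 2 * γ) * (1 + a) ^ (-(2 * γ)) * (1 + a + b) ^ (-γ)
        - γ * (1 + a) ^ (1 - 2 * γ) * (1 + a + b) ^ (-γ - 1) - 3 * (1 + a) ^ (-4 : ℝ);
    let D : ℝ → ℝ → ℝ → ℝ → ℝ := fun a b X Y =>
      -(h₁ a b * X + h₂ a b * Y) * (3 * X + Y) + (3 * h₂ a b - h₁ a b) * X * Y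
        - 2 * h₃ a b * b * X ^ 2;
    ∃ ε ∈ Ioo (0 : ℝ) (1 / 2), ∃ c : ℝ, 0 < c ∧ ∃ C : ℝ, 0 < C ∧
      ∀ a b X Y : ℝ, |a| ≤ ε → |b| ≤ ε →
        c * (X ^ 2 + Y ^ 2) ≤ D a b X Y ∧ D a b X Y ≤ C * (X ^ 2 + Y ^ 2) := by
  intro h₁ h₂ h₃ D
  have hγ0 : (0:ℝ) < γ := by linarith
  set s : ℝ := 3*γ - 4 with hs_def
  have hs : 0 < s := by rw [hs_def]; linarith
  set k : ℝ := (s/γ + 3)/2 with hk_def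
  have hsγ0 : 0 < s/γ := div_pos hs hγ0
  have hk0 : 0 < k := by rw [hk_def]; positivity
  have hsγ3 : s/γ < 3 := by rw [div_lt_iff₀ hγ0, hs_def]; linarith
  have hk3 : k < 3 := by rw [hk_def]; linarith
  have hkγ : s/γ < k := by rw [hk_def]; linarith
  have hskγ : s < k*γ := (div_lt_iff₀ hγ0).1 hkγ
  have h3sk : 0 < 3*s - s*k := by nlinarith
  have hγsk : 0 < γ - s/k := by
    have : s/k < γ := (div_lt_iff₀ hk0).2 (by linarith)
    linarith
  set m : ℝ := min (3*s - s*k) (γ - s/k) with hm_def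
  have hm0 : 0 < m := by rw [hm_def]; exact lt_min h3sk hγsk
  have hm1 : m ≤ 3*s - s*k := by rw [hm_def]; exact min_le_left _ _
  have hm2 : m ≤ γ - s/k := by rw [hm_def]; exact min_le_right _ _
  clear_value s
  -- base quadratic form bound
  have hbase : ∀ X Y : ℝ, m*(X^2+Y^2) ≤ 3*s*X^2 + 2*s*(X*Y) + γ*Y^2 := by
    intro X Y
    have hq : (s/k)*k = s := div_mul_cancel₀ _ (ne_of_gt hk0)
    have key : 0 ≤ (s/k)*(k*X+Y)^2 := by positivity
    have expand : 3*s*X^2 + 2*s*(X*Y) + γ*Y^2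
        = (3*s - s*k)*X^2 + (γ - s/k)*Y^2 + (s/k)*(k*X+Y)^2 := by
      linear_combination (-(k*X^2) - 2*(X*Y)) * hq
    rw [expand]
    have e1 : (s/k)*k^2*X^2 = s*k*X^2 := by
      rw [show (s/k)*k^2*X^2 = ((s/k)*k)*(k*X^2) by ring, hq]; ring
    have e2 : (s/k)*k*(X*Y) = s*(X*Y) := by rw [hq]
    linarith [key, e1, e2, mul_le_mul_of_nonneg_right hm1 (sq_nonneg X),
      mul_le_mul_of_nonneg_right hm2 (sq_nonneg Y)]
  clear_value m
  clear hm1 hm2 hm_def hk_def h3sk hγsk hskγ hkγ hk3 hsγ3 hk0 hsγ0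
  set δ : ℝ := min 1 (m/3) with hδ_def
  have hδ0 : 0 < δ := by rw [hδ_def]; exact lt_min one_pos (by positivity)
  have hδ1 : δ ≤ 1 := by rw [hδ_def]; exact min_le_left _ _
  have hδm : δ ≤ m/3 := by rw [hδ_def]; exact min_le_right _ _
  clear_value δ
  -- values at zero
  have hv1 : h₁ 0 0 = 4 - 3*γ := by norm_num [h₁]; ring
  have hv2 : h₂ 0 0 = -γ := by norm_num [h₂]
  have hv3 : h₃ 0 0 = -2 - 3*γ := by norm_num [h₃]; ring
  -- continuity of the coefficient functions at the origin
  have ha : ContinuousAt (fun p : ℝ×ℝ => 1 + p.1) ((0:ℝ),(0:ℝ)) := by fun_prop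
  have hab : ContinuousAt (fun p : ℝ×ℝ => 1 + p.1 + p.2) ((0:ℝ),(0:ℝ)) := by fun_prop
  have r1 := ha.rpow_const (p := 1-2*γ) (Or.inl (by norm_num))
  have r2 := ha.rpow_const (p := 2-2*γ) (Or.inl (by norm_num))
  have r3 := ha.rpow_const (p := (-3:ℝ)) (Or.inl (by norm_num))
  have r4 := ha.rpow_const (p := -(2*γ)) (Or.inl (by norm_num))
  have r5 := ha.rpow_const (p := (-4:ℝ)) (Or.inl (by norm_num))
  have r6 := hab.rpow_const (p := -γ) (Or.inl (by norm_num))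
  have r7 := hab.rpow_const (p := -γ-1) (Or.inl (by norm_num))
  have c1 : ContinuousAt (fun p : ℝ×ℝ => h₁ p.1 p.2) ((0:ℝ),(0:ℝ)) := by
    simp only [h₁]
    exact (((continuousAt_const.mul r1).mul r6).sub
      ((continuousAt_const.mul r2).mul r7)).add (continuousAt_const.mul r3)
  have c2 : ContinuousAt (fun p : ℝ×ℝ => h₂ p.1 p.2) ((0:ℝ),(0:ℝ)) := by
    simp only [h₂]
    exact (continuousAt_const.mul r2).mul r7
  have c3 : ContinuousAt (fun p : ℝ×ℝ => h₃ p.1 p.2) ((0:ℝ),(0:ℝ)) := by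
    simp only [h₃]
    exact (((continuousAt_const.mul r4).mul r6).sub
      ((continuousAt_const.mul r1).mul r7)).sub (continuousAt_const.mul r5)
  -- extract metric neighborhoods
  have hδ6 : 0 < δ/6 := by positivity
  obtain ⟨ε₁, hε₁0, hε₁⟩ := Metric.continuousAt_iff.1 c1 (δ/6) hδ6
  obtain ⟨ε₂, hε₂0, hε₂⟩ := Metric.continuousAt_iff.1 c2 δ hδ0
  obtain ⟨ε₃, hε₃0, hε₃⟩ := Metric.continuousAt_iff.1 c3 1 one_pos
  set M : ℝ := |(-2:ℝ) - 3*γ| + 1 with hM_def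
  have hM0 : 0 < M := by rw [hM_def]; positivity
  set ε : ℝ := min (min (min (ε₁/2) (ε₂/2)) (min (ε₃/2) (1/4))) (δ/(4*M)) with hε_def
  have hε0 : 0 < ε := by
    rw [hε_def]
    apply lt_min (lt_min (lt_min (by linarith) (by linarith)) (lt_min (by linarith) (by norm_num)))
    positivity
  have hεle : ε ≤ 1/4 := by
    rw [hε_def]
    exact le_trans (min_le_left _ _) (le_trans (min_le_right _ _) (min_le_right _ _))
  have hεM : ε ≤ δ/(4*M) := by rw [hε_def]; exact min_le_right _ _
  have hεe1 : ε ≤ ε₁/2 := by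
    rw [hε_def]
    exact le_trans (min_le_left _ _) (le_trans (min_le_left _ _) (min_le_left _ _))
  have hεe2 : ε ≤ ε₂/2 := by
    rw [hε_def]
    exact le_trans (min_le_left _ _) (le_trans (min_le_left _ _) (min_le_right _ _))
  have hεe3 : ε ≤ ε₃/2 := by
    rw [hε_def]
    exact le_trans (min_le_left _ _) (le_trans (min_le_right _ _) (min_le_left _ _))
  clear_value ε
  refine ⟨ε, ⟨hε0, by linarith⟩, m/2, by linarith, 5*s + γ + 3, by linarith, ?_⟩
  intro a b X Y haa hbb
  -- distance facts
  have hdist : dist ((a,b) : ℝ×ℝ) ((0:ℝ),(0:ℝ)) ≤ ε := by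
    rw [Prod.dist_eq]
    apply max_le
    · simpa [Real.dist_eq] using haa
    · simpa [Real.dist_eq] using hbb
  have hd1 : dist ((a,b) : ℝ×ℝ) ((0:ℝ),(0:ℝ)) < ε₁ := by
    refine lt_of_le_of_lt hdist (lt_of_le_of_lt hεe1 (by linarith))
  have hd2 : dist ((a,b) : ℝ×ℝ) ((0:ℝ),(0:ℝ)) < ε₂ := by
    refine lt_of_le_of_lt hdist (lt_of_le_of_lt hεe2 (by linarith))
  have hd3 : dist ((a,b) : ℝ×ℝ) ((0:ℝ),(0:ℝ)) < ε₃ := by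
    refine lt_of_le_of_lt hdist (lt_of_le_of_lt hεe3 (by linarith))
  have b1 : |h₁ a b - (4 - 3*γ)| < δ/6 := by
    have h := hε₁ hd1
    rw [Real.dist_eq] at h
    simp only [hv1] at h
    convert h using 2
  have b2 : |h₂ a b - (-γ)| < δ := by
    have h := hε₂ hd2
    rw [Real.dist_eq] at h
    simp only [hv2] at h
    convert h using 2
  have b3 : |h₃ a b - (-2 - 3*γ)| < 1 := by
    have h := hε₃ hd3
    rw [Real.dist_eq] at h
    simp only [hv3] at h
    convert h using 2
  have b3' : |h₃ a b| ≤ M := by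
    have h0 := abs_sub_abs_le_abs_sub (h₃ a b) (-2 - 3*γ)
    rw [hM_def]
    have : |(-2:ℝ) - 3*γ| = |(-2:ℝ) - 3*γ| := rfl
    linarith [b3.le, h0]
  clear_value M
  -- coefficient bounds
  set Ap : ℝ := -3 * h₁ a b - 2 * h₃ a b * b with hAp_def
  set Bp : ℝ := -2 * h₁ a b with hBp_def
  set Ep : ℝ := - h₂ a b with hEp_def
  have hDval : D a b X Y = Ap*X^2 + Bp*(X*Y) + Ep*Y^2 := by
    simp only [D, hAp_def, hBp_def, hEp_def]; ring
  have hb3b : |h₃ a b * b| ≤ δ/4 := by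
    rw [abs_mul]
    calc |h₃ a b| * |b| ≤ M * (δ/(4*M)) := by
          apply mul_le_mul b3' (le_trans hbb hεM) (abs_nonneg _) hM0.le
      _ = δ/4 := by field_simp
  have hA : |Ap - 3*s| ≤ δ := by
    have he : Ap - 3*s = -3*(h₁ a b - (4 - 3*γ)) - 2*(h₃ a b * b) := by
      rw [hAp_def, hs_def]; ring
    rw [he]
    calc |(-3)*(h₁ a b - (4 - 3*γ)) - 2*(h₃ a b * b)|
        ≤ |(-3)*(h₁ a b - (4 - 3*γ))| + |2*(h₃ a b * b)| := abs_sub _ _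
      _ = 3*|h₁ a b - (4 - 3*γ)| + 2*|h₃ a b * b| := by
          rw [abs_mul, abs_mul]; norm_num
      _ ≤ 3*(δ/6) + 2*(δ/4) := by
          have h1 := b1.le
          gcongr
      _ = δ := by ring
  have hB : |Bp - 2*s| ≤ δ := by
    have he : Bp - 2*s = -2*(h₁ a b - (4 - 3*γ)) := by rw [hBp_def, hs_def]; ring
    rw [he, abs_mul]
    have h1 := b1.le
    calc |(-2:ℝ)| * |h₁ a b - (4 - 3*γ)| = 2 * |h₁ a b - (4 - 3*γ)| := by norm_num
      _ ≤ 2 * (δ/6) := by gcongr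
      _ ≤ δ := by linarith
  have hE : |Ep - γ| ≤ δ := by
    have he : Ep - γ = -(h₂ a b - (-γ)) := by rw [hEp_def]; ring
    rw [he, abs_neg]
    exact b2.le
  rw [abs_le] at hA hB hE
  obtain ⟨hAl, hAu⟩ := hA
  obtain ⟨hBl, hBu⟩ := hB
  obtain ⟨hEl, hEu⟩ := hE
  clear_value Ap Bp Ep
  rw [hDval]
  constructor
  · -- lower bound
    have p1 : 0 ≤ (Ap - (3*s - δ)) * X^2 :=
      mul_nonneg (by linarith) (sq_nonneg X)
    have p2 : 0 ≤ (Ep - (γ - δ)) * Y^2 :=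
      mul_nonneg (by linarith) (sq_nonneg Y)
    have p3 : 0 ≤ (Bp - (2*s - δ)) * (X+Y)^2 :=
      mul_nonneg (by linarith) (sq_nonneg _)
    have p4 : 0 ≤ ((2*s + δ) - Bp) * (X-Y)^2 :=
      mul_nonneg (by linarith) (sq_nonneg _)
    have p5 : 0 ≤ (m - 3*δ) * (X^2 + Y^2) :=
      mul_nonneg (by linarith) (by positivity)
    linarith [p1, p2, p3, p4, p5, hbase X Y]
  · -- upper bound
    have u1 : 0 ≤ ((3*s + δ) - Ap) * X^2 :=
      mul_nonneg (by linarith) (sq_nonneg X)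
    have u2 : 0 ≤ ((γ + δ) - Ep) * Y^2 :=
      mul_nonneg (by linarith) (sq_nonneg Y)
    have u3 : 0 ≤ ((2*s + δ) - Bp) * (X+Y)^2 :=
      mul_nonneg (by linarith) (sq_nonneg _)
    have u4 : 0 ≤ (Bp - (2*s - δ)) * (X-Y)^2 :=
      mul_nonneg (by linarith) (sq_nonneg _)
    have u5 : 0 ≤ s * (X-Y)^2 := mul_nonneg hs.le (sq_nonneg _)
    have v1 : 0 ≤ s * X^2 := mul_nonneg hs.le (sq_nonneg X)
    have v2 : 0 ≤ s * Y^2 := mul_nonneg hs.le (sq_nonneg Y)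
    have v3 : 0 ≤ γ * X^2 := mul_nonneg hγ0.le (sq_nonneg X)
    have v4 : 0 ≤ γ * Y^2 := mul_nonneg hγ0.le (sq_nonneg Y)
    have v5 : 0 ≤ (1 - δ) * X^2 := mul_nonneg (by linarith) (sq_nonneg X)
    have v6 : 0 ≤ (1 - δ) * Y^2 := mul_nonneg (by linarith) (sq_nonneg Y)
    linarith [u1, u2, u3, u4, u5, v1, v2, v3, v4, v5, v6, sq_nonneg X, sq_nonneg Y]
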